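/- Symmetry of the precedence Shapley value: let p be the uniform distribution on linear extensions of ([n],⪯), and suppose players i and j are symmetric both in the game (U(S ∪ {i}) = U(S ∪ {j}) for all S ⊆ [n]\{i,j}) and in the poset (the map swapping i and j is an automorphism of ⪯). Then the random order values satisfy ψ_i(U) = ψ_j(U). -/
import Mathlib


open Finset
open scoped Classical BigOperators

def IsLinExt {n : ℕ} (le : Fin n → Fin n → Prop) (π : Equiv.Perm (Fin n)) : Prop :=
  ∀ i j : Fin n, le i j → i ≠ j → ((π.symm i : ℕ) < (π.symm j : ℕ))

def prefixSet {n : ℕ} (π : Equiv.Perm (Fin n)) (t : ℕ) : Finset (Fin n) :=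
  Finset.univ.filter fun i => (π.symm i : ℕ) < t

noncomputable def maxSet {n : ℕ} (le : Fin n → Fin n → Prop) (S : Finset (Fin n)) :
    Finset (Fin n) :=
  S.filter fun i => ∀ j ∈ S, le i j → i = j

noncomputable def pasvW {n : ℕ} (le : Fin n → Fin n → Prop) (lam : Fin n → ℝ)
    (π : Equiv.Perm (Fin n)) : ℝ :=
  ∏ t : Fin n,
    lam (π t) * (maxSet le (prefixSet π (t.1 + 1))).card /
      ∑ k ∈ maxSet le (prefixSet π (t.1 + 1)), lam k

noncomputable def pasvDist {n : ℕ} (le : Fin n → Fin n → Prop) (lam : Fin n → ℝ)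
    (π : Equiv.Perm (Fin n)) : ℝ :=
  if IsLinExt le π then
    pasvW le lam π / ∑ σ ∈ Finset.univ.filter (fun σ => IsLinExt le σ), pasvW le lam σ
  else 0

def before {n : ℕ} (π : Equiv.Perm (Fin n)) (i : Fin n) : Finset (Fin n) :=
  Finset.univ.filter fun j => (π.symm j : ℕ) < (π.symm i : ℕ)

noncomputable def rov {n : ℕ} (p : Equiv.Perm (Fin n) → ℝ) (U : Finset (Fin n) → ℝ)
    (i : Fin n) : ℝ :=
  ∑ π : Equiv.Perm (Fin n), p π * (U (insert i (before π i)) - U (before π i))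


lemma symm_mul_swap_apply {n : ℕ} (i j : Fin n) (π : Equiv.Perm (Fin n)) (x : Fin n) :
    (Equiv.swap i j * π).symm x = π.symm (Equiv.swap i j x) := by
  have : (Equiv.swap i j * π).symm x = π.symm ((Equiv.swap i j).symm x) := rfl
  rw [this, Equiv.symm_swap]

lemma linext_mul_swap {n : ℕ} (le : Fin n → Fin n → Prop) (i j : Fin n)
    (hauto : ∀ a b : Fin n, le a b ↔ le (Equiv.swap i j a) (Equiv.swap i j b))
    (π : Equiv.Perm (Fin n)) :
    IsLinExt le (Equiv.swap i j * π) ↔ IsLinExt le π := by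
  constructor
  · intro h a b hab hne
    have := h (Equiv.swap i j a) (Equiv.swap i j b) ((hauto a b).mp hab)
      (fun he => hne (Equiv.injective _ he))
    simpa [symm_mul_swap_apply] using this
  · intro h a b hab hne
    have := h (Equiv.swap i j a) (Equiv.swap i j b) ((hauto a b).mp hab)
      (fun he => hne (Equiv.injective _ he))
    simpa [symm_mul_swap_apply] using this

lemma before_mul_swap {n : ℕ} (i j : Fin n) (π : Equiv.Perm (Fin n)) :
    before (Equiv.swap i j * π) j = (before π i).image (Equiv.swap i j) := by
  ext k
  constructor
  · intro hk
    refine Finset.mem_image.mpr ⟨Equiv.swap i j k, ?_, by simp⟩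
    simp only [before, Finset.mem_filter, Finset.mem_univ, true_and] at hk ⊢
    simpa [symm_mul_swap_apply] using hk
  · intro hk
    obtain ⟨a, ha, rfl⟩ := Finset.mem_image.mp hk
    simp only [before, Finset.mem_filter, Finset.mem_univ, true_and] at ha ⊢
    simpa [symm_mul_swap_apply] using ha

lemma image_swap_of_notMem {n : ℕ} (i j : Fin n) (T : Finset (Fin n))
    (hi : i ∉ T) (hj : j ∉ T) : T.image (Equiv.swap i j) = T := by
  have h : ∀ x ∈ T, Equiv.swap i j x = x := fun x hx =>
    Equiv.swap_apply_of_ne_of_ne (fun h => hi (h ▸ hx)) (fun h => hj (h ▸ hx))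
  calc T.image (Equiv.swap i j) = T.image id := Finset.image_congr h
    _ = T := Finset.image_id

lemma key_diff {n : ℕ} (U : Finset (Fin n) → ℝ) (i j : Fin n)
    (hgame : ∀ S : Finset (Fin n), i ∉ S → j ∉ S → U (insert i S) = U (insert j S))
    (S : Finset (Fin n)) (hi : i ∉ S) :
    U (insert j (S.image (Equiv.swap i j))) - U (S.image (Equiv.swap i j))
      = U (insert i S) - U S := by
  by_cases hj : j ∈ S
  · have hij : i ≠ j := fun h => hi (h ▸ hj)
    have hS : S = insert j (S.erase j) := (Finset.insert_erase hj).symm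
    have hiT : i ∉ S.erase j := fun h => hi (Finset.mem_of_mem_erase h)
    have hjT : j ∉ S.erase j := Finset.notMem_erase _ _
    have himg : S.image (Equiv.swap i j) = insert i (S.erase j) := by
      conv_lhs => rw [hS]
      rw [Finset.image_insert, Equiv.swap_apply_right,
        image_swap_of_notMem i j _ hiT hjT]
    rw [himg]
    conv_rhs => rw [hS]
    rw [Finset.insert_comm, hgame _ hiT hjT]
  · rw [image_swap_of_notMem i j S hi hj, hgame S hi hj]

theorem stmt19 {n : ℕ} (le : Fin n → Fin n → Prop) (hle : IsPartialOrder (Fin n) le)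
    (U : Finset (Fin n) → ℝ) (i j : Fin n)
    (hgame : ∀ S : Finset (Fin n), i ∉ S → j ∉ S → U (insert i S) = U (insert j S))
    (hauto : ∀ a b : Fin n, le a b ↔ le (Equiv.swap i j a) (Equiv.swap i j b)) :
    rov (fun π => if IsLinExt le π then
          (1 : ℝ) / (Finset.univ.filter (fun σ => IsLinExt le σ)).card else 0) U i =
      rov (fun π => if IsLinExt le π then
          (1 : ℝ) / (Finset.univ.filter (fun σ => IsLinExt le σ)).card else 0) U j := by
  classical
  unfold rov
  refine Fintype.sum_equiv (Equiv.mulLeft (Equiv.swap i j)) _ _ (fun π => ?_)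
  have hi : i ∉ before π i := by simp [before]
  have hp : IsLinExt le (Equiv.swap i j * π) ↔ IsLinExt le π :=
    linext_mul_swap le i j hauto π
  have hb : before (Equiv.swap i j * π) j = (before π i).image (Equiv.swap i j) :=
    before_mul_swap i j π
  simp only [Equiv.coe_mulLeft, hb, hp]
  rw [key_diff U i j hgame (before π i) hi]
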